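/- Let λ be a weakly decreasing tuple of nonnegative integers of length n > 2, λ' = (λ_2,…,λ_n), and λ'' = (λ_3,…,λ_n). Then, in F, −x_1^{λ_2} · ∏_{a=2}^n (x_1 − t x_a)/(x_1 − x_a) · ζ(P_{λ'}(x;t)) = x_1^{λ_2} · Σ_{i=2}^n ∏_{1≤a≤n, a≠i}(x_i − t x_a)/(x_i − x_a) · ∏_{1≤a≤n, a≠1,i}(x_1 − t x_a)/(x_1 − x_a) · ((x_1 − t x_i)·x_i^{λ_2}/(x_i − t x_1)) · ζ_{1,i}(P_{λ''}(x;t)). -/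

import Mathlib

open MvPolynomial Finset

noncomputable section

abbrev Rr : Type := MvPolynomial (Fin 2 ⊕ ℕ) ℚ

abbrev F : Type := FractionRing Rr

/-- The variable `q`. -/
def q : F := algebraMap Rr F (X (Sum.inl 0))

/-- The variable `t`. -/
def t : F := algebraMap Rr F (X (Sum.inl 1))

/-- `x k` is the variable `x_{k+1}` of the paper (0-indexed). -/
def x (k : ℕ) : F := algebraMap Rr F (X (Sum.inr k))

/-- Substitution endomorphism of `F` induced by an injective map of variables. -/
def subF (g : Fin 2 ⊕ ℕ → Fin 2 ⊕ ℕ) (hg : Function.Injective g) : F →+* F :=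
  IsFractionRing.lift (g := (algebraMap Rr F).comp (rename g).toRingHom)
    (by
      rw [RingHom.coe_comp]
      exact (IsFractionRing.injective Rr F).comp (rename_injective g hg))

def permNat (n : ℕ) (σ : Equiv.Perm (Fin n)) : ℕ → ℕ :=
  fun k => if h : k < n then (σ ⟨k, h⟩ : ℕ) else k

lemma permNat_inj (n : ℕ) (σ : Equiv.Perm (Fin n)) : Function.Injective (permNat n σ) := by
  intro a b hab
  unfold permNat at hab
  split_ifs at hab with h1 h2 h2
  · have := σ.injective (Fin.val_injective hab)
    exact congrArg Fin.val this
  · have := (σ ⟨a, h1⟩).isLt; omega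
  · have := (σ ⟨b, h2⟩).isLt; omega
  · exact hab

/-- The action of a permutation `σ ∈ S_n` on `F`, permuting `x_1, …, x_n`. -/
def pact (n : ℕ) (σ : Equiv.Perm (Fin n)) : F →+* F :=
  subF (Sum.map id (permNat n σ)) (Function.injective_id.sumMap (permNat_inj n σ))

def shiftNat (i : ℕ) : ℕ → ℕ := fun k => if k < i then k else k + 1

lemma shiftNat_inj (i : ℕ) : Function.Injective (shiftNat i) := by
  intro a b; unfold shiftNat; split_ifs <;> omega

/-- `zeta i` is the endomorphism `ζ_{i+1}` of the paper: it fixes `q`, `t` and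
`x k` for `k < i`, and sends `x k` to `x (k+1)` for `k ≥ i` (0-indexed). -/
def zeta (i : ℕ) : F →+* F :=
  subF (Sum.map id (shiftNat i)) (Function.injective_id.sumMap (shiftNat_inj i))

/-- `zetaP i j` is `ζ_{i+1,j+1}` of the paper. -/
def zetaP (i j : ℕ) : F →+* F := (zeta (max i j)).comp (zeta (min i j))

/-- The Hall–Littlewood polynomial `P_λ(x; t)` in `n` variables. -/
def HL (n : ℕ) (lam : Fin n → ℕ) : F :=
  ∑ σ : Equiv.Perm (Fin n), pact n σ
    ((∏ i : Fin n, x i.val ^ lam i) *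
      ∏ i : Fin n, ∏ j ∈ Finset.Ioi i, (x i.val - t * x j.val) / (x i.val - x j.val))

/-- `ρ_n`, 0-indexed: `rho n i = n - 1 - i`. -/
def rho (n : ℕ) : Fin n → ℕ := fun i => n - 1 - i.val

/-- The deformed Weyl denominator `Δ_n(c) = ∏_{i<j} (x_i - c x_j)`. -/
def DeltaQ (n : ℕ) (c : F) : F := ∏ i : Fin n, ∏ j ∈ Finset.Ioi i, (x i.val - c * x j.val)

/-- The Schur polynomial `s_λ(x) = Σ_σ σ(x^{λ+ρ}/Δ_n)`. -/
def Schur (n : ℕ) (lam : Fin n → ℕ) : F :=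
  ∑ σ : Equiv.Perm (Fin n), pact n σ
    ((∏ i : Fin n, x i.val ^ (lam i + rho n i)) / DeltaQ n 1)

/-- `GT2 n α` is the set of tuples `μ` of length `n` with `α_{i+1} ≤ μ_i ≤ α_i`. -/
def GT2 (n : ℕ) (α : Fin (n+1) → ℕ) : Finset (Fin n → ℕ) :=
  Fintype.piFinset (fun i => Finset.Icc (α i.succ) (α i.castSucc))

def GLw (y a : ℕ) : F := if y = a then -q else if y + 1 = a then t else 0

def GRw (y b : ℕ) : F := if y = b then 1 else if y = b + 1 then -q * t else 0

/-- `w(μ_j)` where `a1 = α_j`, `a2 = α_{j+1}`, `m = μ_j`. -/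
def wgt (a1 a2 m : ℕ) : F :=
  (if m = a1 ∨ m = a2 then 0 else (1 - q) * (1 - t)) + GLw m a1 + GRw m a2

/-- The tridiagonal determinant `M(α; μ)`. -/
def Mdet (n : ℕ) (α : Fin (n+1) → ℕ) (μ : Fin n → ℕ) : F :=
  Matrix.det (Matrix.of fun i j : Fin n =>
    if i = j then wgt (α i.castSucc) (α i.succ) (μ i)
    else if (i : ℕ) + 1 = (j : ℕ) then 1
    else if (j : ℕ) + 1 = (i : ℕ) then GRw (μ j) (α i.castSucc) * GLw (μ i) (α i.castSucc)
    else 0)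

def tot {n : ℕ} (f : Fin n → ℕ) : ℕ := ∑ i, f i



-- ===== auxiliary lemmas =====

lemma subF_algebraMap (g : Fin 2 ⊕ ℕ → Fin 2 ⊕ ℕ) (hg : Function.Injective g) (p : Rr) :
    subF g hg (algebraMap Rr F p) = algebraMap Rr F (rename g p) :=
  IsFractionRing.lift_algebraMap _ _

lemma subF_x (f : ℕ → ℕ) (hf : Function.Injective (Sum.map id f : Fin 2 ⊕ ℕ → Fin 2 ⊕ ℕ)) (k : ℕ) :
    subF (Sum.map id f) hf (x k) = x (f k) := by
  rw [x, subF_algebraMap, rename_X]; rfl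

lemma subF_t (f : ℕ → ℕ) (hf : Function.Injective (Sum.map id f : Fin 2 ⊕ ℕ → Fin 2 ⊕ ℕ)) :
    subF (Sum.map id f) hf t = t := by
  rw [t, subF_algebraMap, rename_X]; rfl

lemma pact_x (n : ℕ) (σ : Equiv.Perm (Fin n)) (k : ℕ) :
    pact n σ (x k) = x (permNat n σ k) := subF_x _ _ k

lemma pact_t (n : ℕ) (σ : Equiv.Perm (Fin n)) : pact n σ t = t := subF_t _ _

lemma zeta_x (i k : ℕ) : zeta i (x k) = x (shiftNat i k) := subF_x _ _ k

lemma zeta_t (i : ℕ) : zeta i t = t := subF_t _ _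

lemma algebraMap_ne_zero {p : Rr} (hp : p ≠ 0) : algebraMap Rr F p ≠ 0 :=
  (map_ne_zero_iff _ (IsFractionRing.injective Rr F)).2 hp

lemma x_sub_x_ne {i j : ℕ} (h : i ≠ j) : x i - x j ≠ 0 := by
  rw [x, x, ← map_sub]
  apply algebraMap_ne_zero
  intro hc
  have := congrArg (eval (fun v => if v = Sum.inr i then (1:ℚ) else 0)) hc
  rw [map_sub, eval_X, eval_X, map_zero] at this
  simp [h, Ne.symm h] at this

lemma x_sub_tx_ne (i j : ℕ) : x i - t * x j ≠ 0 := by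
  rw [x, x, t, ← map_mul, ← map_sub]
  apply algebraMap_ne_zero
  intro hc
  have := congrArg (eval (fun v => if v = Sum.inr i then (1:ℚ) else 0)) hc
  rw [map_sub, map_mul, eval_X, eval_X, eval_X, map_zero] at this
  simp at this

/-- A generalized (relabeled) form of the Hall-Littlewood summation. -/
def G (k : ℕ) (f : Fin k → ℕ) (μ : Fin k → ℕ) : F :=
  ∑ σ : Equiv.Perm (Fin k), (∏ i : Fin k, x (f (σ i)) ^ μ i) *
    ∏ i : Fin k, ∏ j ∈ Finset.Ioi i,
      (x (f (σ i)) - t * x (f (σ j))) / (x (f (σ i)) - x (f (σ j)))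

lemma permNat_val (n : ℕ) (σ : Equiv.Perm (Fin n)) (i : Fin n) :
    permNat n σ i.val = (σ i).val := by
  simp [permNat]

lemma HL_eq_G (n : ℕ) (μ : Fin n → ℕ) : HL n μ = G n Fin.val μ := by
  unfold HL G
  refine Finset.sum_congr rfl fun σ _ => ?_
  simp only [map_mul, map_prod, map_pow, map_div₀, map_sub, pact_x, pact_t, permNat_val]

lemma phi_G (Φ : F →+* F) (g : ℕ → ℕ) (hT : Φ t = t) (hx : ∀ k, Φ (x k) = x (g k))
    (k : ℕ) (f μ : Fin k → ℕ) : Φ (G k f μ) = G k (fun i => g (f i)) μ := by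
  unfold G
  rw [map_sum]
  refine Finset.sum_congr rfl fun σ _ => ?_
  simp only [map_mul, map_prod, map_pow, map_div₀, map_sub, hx, hT]

lemma zeta0_HL (n : ℕ) (μ : Fin n → ℕ) :
    zeta 0 (HL n μ) = G n (fun i => i.val + 1) μ := by
  rw [HL_eq_G, phi_G (zeta 0) (shiftNat 0) (zeta_t 0) (zeta_x 0)]
  exact congrArg (fun f => G n f μ) (funext fun i => by simp [shiftNat])

lemma zetaP0_HL (i n : ℕ) (μ : Fin n → ℕ) :
    zetaP 0 (i+1) (HL n μ) = G n (fun j => shiftNat (i+1) (j.val + 1)) μ := by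
  have h : zetaP 0 (i+1) = (zeta (i+1)).comp (zeta 0) := by
    simp [zetaP]
  rw [h, RingHom.comp_apply, HL_eq_G,
    phi_G (zeta 0) (shiftNat 0) (zeta_t 0) (zeta_x 0),
    phi_G (zeta (i+1)) (shiftNat (i+1)) (zeta_t _) (zeta_x _)]
  exact congrArg (fun f => G n f μ) (funext fun j => by simp [shiftNat])

lemma G_perm (k : ℕ) (f μ : Fin k → ℕ) (c : Equiv.Perm (Fin k)) :
    G k (fun j => f (c j)) μ = G k f μ := by
  unfold G
  rw [← Equiv.sum_comp (Equiv.mulLeft c) (fun σ : Equiv.Perm (Fin k) =>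
    (∏ i : Fin k, x (f (σ i)) ^ μ i) *
    ∏ i : Fin k, ∏ j ∈ Finset.Ioi i,
      (x (f (σ i)) - t * x (f (σ j))) / (x (f (σ i)) - x (f (σ j))))]
  refine Finset.sum_congr rfl fun σ _ => ?_
  simp [Equiv.Perm.mul_apply]

lemma swap_succ_mem (k : ℕ) (p : Fin (k+1)) (j : Fin k) :
    Equiv.swap 0 p j.succ ≠ p := by
  intro hc
  have : j.succ = (0 : Fin (k+1)) := by
    have := congrArg (Equiv.swap 0 p) hc
    rwa [Equiv.swap_apply_self, Equiv.swap_apply_right] at this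
  exact Fin.succ_ne_zero j this

lemma prod_swap_succ (k : ℕ) (p : Fin (k+1)) (g : Fin (k+1) → F) :
    (∏ j : Fin k, g (Equiv.swap 0 p j.succ)) = ∏ a ∈ Finset.univ.erase p, g a := by
  refine Finset.prod_nbij (fun j => Equiv.swap 0 p j.succ) ?_ ?_ ?_ ?_
  · intro j _
    exact Finset.mem_erase.2 ⟨swap_succ_mem k p j, Finset.mem_univ _⟩
  · intro a _ b _ h
    exact Fin.succ_injective _ ((Equiv.swap 0 p).injective h)
  · intro a ha
    have ha' : a ≠ p := (Finset.mem_erase.1 (by exact_mod_cast ha)).1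
    have hb : Equiv.swap 0 p a ≠ 0 := by
      intro hc
      have := congrArg (Equiv.swap 0 p) hc
      rw [Equiv.swap_apply_self, Equiv.swap_apply_left] at this
      exact ha' this
    refine ⟨(Equiv.swap 0 p a).pred hb, by simp, ?_⟩
    simp only [Fin.succ_pred, Equiv.swap_apply_self]
  · intro j _
    rfl

lemma G_branch (k : ℕ) (f μ : Fin (k+1) → ℕ) :
    G (k+1) f μ = ∑ p : Fin (k+1), x (f p) ^ μ 0 *
      (∏ a ∈ Finset.univ.erase p, (x (f p) - t * x (f a)) / (x (f p) - x (f a))) *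
      G k (fun j => f (Equiv.swap 0 p j.succ)) (fun j => μ j.succ) := by
  unfold G
  rw [← Equiv.sum_comp (Equiv.Perm.decomposeFin (n := k)).symm, Fintype.sum_prod_type]
  refine Finset.sum_congr rfl fun p _ => ?_
  rw [Finset.mul_sum]
  refine Finset.sum_congr rfl fun e _ => ?_
  simp only [Fin.prod_univ_succ, Fin.prod_Ioi_zero, Fin.prod_Ioi_succ,
    Equiv.Perm.decomposeFin_symm_apply_zero, Equiv.Perm.decomposeFin_symm_apply_succ]
  rw [Equiv.prod_comp e (fun j : Fin k =>
    (x (f p) - t * x (f (Equiv.swap 0 p j.succ))) / (x (f p) - x (f (Equiv.swap 0 p j.succ))))]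
  rw [prod_swap_succ k p (fun a => (x (f p) - t * x (f a)) / (x (f p) - x (f a)))]
  ring

lemma shift_swap_eq (m : ℕ) (p : Fin (m+2)) (d : Fin (m+1)) (hd : d.val = p.val - 1)
    (j : Fin (m+1)) :
    shiftNat (p.val + 1) ((Fin.cycleRange d j).val + 1)
      = (Equiv.swap 0 p j.succ).val + 1 := by
  by_cases hp : p.val = 0
  · have hd0 : d = 0 := by ext; simp [hd, hp]
    have hp0 : p = 0 := by ext; simp [hp]
    rw [hd0, hp0, Fin.cycleRange_zero, Equiv.swap_self]
    simp [shiftNat]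
  have hc : (Fin.cycleRange d j).val
      = if j.val < d.val then j.val + 1 else if j.val = d.val then 0 else j.val := by
    rcases lt_trichotomy j.val d.val with h | h | h
    · rw [Fin.coe_cycleRange_of_lt (Fin.lt_def.2 h), if_pos h]
    · have : j = d := Fin.ext h
      rw [this, Fin.cycleRange_self]
      simp [h]
    · rw [Fin.cycleRange_of_gt (Fin.lt_def.2 h), if_neg (by omega), if_neg (by omega)]
  have hsv : ((Equiv.swap 0 p) j.succ).val = if j.val + 1 = p.val then 0 else j.val + 1 := by
    by_cases h : j.succ = p
    · rw [h, Equiv.swap_apply_right, if_pos]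
      · rfl
      · have := congrArg Fin.val h
        simpa using this
    · rw [Equiv.swap_apply_of_ne_of_ne (Fin.succ_ne_zero j) h, if_neg]
      · rfl
      · intro hc2
        exact h (Fin.ext (by simpa using hc2))
  rw [hc, hsv, shiftNat]
  split_ifs <;> omega

lemma sum_Icc_one (N : ℕ) (W : ℕ → F) :
    ∑ i ∈ Finset.Icc 1 (N+1), W i = ∑ p : Fin (N+1), W (p.val+1) := by
  have hset : Finset.Icc 1 (N + 1)
      = Finset.map ⟨fun n => n + 1, fun a b h => by have h' : a + 1 = b + 1 := h; omega⟩ (Finset.range (N + 1)) := by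
    ext a
    simp only [Finset.mem_Icc, Finset.mem_map, Finset.mem_range, Function.Embedding.coeFn_mk]
    constructor
    · rintro ⟨h1, h2⟩; exact ⟨a - 1, by omega, by show a - 1 + 1 = a; omega⟩
    · rintro ⟨b, hb, h⟩
      have h' : b + 1 = a := h
      omega
  rw [hset, Finset.sum_map, Fin.sum_univ_eq_sum_range (fun i => W (i + 1)) (N + 1)]
  rfl

lemma Icc_erase (m : ℕ) : Finset.Icc 1 (m+2) = (Finset.range (m+3)).erase 0 := by
  ext a
  simp only [Finset.mem_Icc, Finset.mem_erase, Finset.mem_range]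
  omega

lemma C_prod_eq (m : ℕ) (p : Fin (m+2)) (g : ℕ → F) :
    (∏ a ∈ Finset.univ.erase p, g (a.val + 1))
      = ∏ a ∈ ((Finset.range (m+3)).erase (p.val+1)).erase 0, g a := by
  refine Finset.prod_bij' (fun a _ => a.val + 1)
    (fun b hb => ⟨b - 1, by simp only [Finset.mem_erase, Finset.mem_range] at hb; omega⟩)
    ?_ ?_ ?_ ?_ ?_
  · intro a ha
    have h1 : a ≠ p := (Finset.mem_erase.1 ha).1
    simp only [Finset.mem_erase, Finset.mem_range]
    refine ⟨by omega, ?_, by omega⟩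
    intro hc
    exact h1 (Fin.ext (by omega))
  · intro b hb
    simp only [Finset.mem_erase, Finset.mem_range] at hb
    obtain ⟨hb0, hbp, hbr⟩ := hb
    refine Finset.mem_erase.2 ⟨?_, Finset.mem_univ _⟩
    intro hc
    have := congrArg Fin.val hc
    simp only [Fin.val_mk] at this
    omega
  · intro a ha
    have h1 : a ≠ p := (Finset.mem_erase.1 ha).1
    exact Fin.ext (by simp)
  · intro b hb
    simp only [Finset.mem_erase, Finset.mem_range] at hb
    simp only [Fin.val_mk]
    omega
  · intro a _
    rfl

lemma alg_helper (X0 XI T B C Z : F) (L : ℕ) (h1 : X0 - XI ≠ 0) (h2 : XI - X0 ≠ 0)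
    (h3 : XI - T * X0 ≠ 0) :
    -(X0 ^ L) * ((X0 - T * XI) / (X0 - XI) * B) * (XI ^ L * C * Z)
      = X0 ^ L * ((XI - T * X0) / (XI - X0) * C * B *
          ((X0 - T * XI) * XI ^ L / (XI - T * X0)) * Z) := by
  have h3' : XI - X0 * T ≠ 0 := by rwa [mul_comm]
  field_simp
  ring


lemma term_eq (m L : ℕ) (p : Fin (m+2)) (Z : F) :
    -(x 0 ^ L) * (∏ a ∈ Finset.Icc 1 (m + 2), (x 0 - t * x a) / (x 0 - x a)) *
      (x (p.val+1) ^ L *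
        (∏ a ∈ Finset.univ.erase p,
          (x (p.val+1) - t * x (a.val+1)) / (x (p.val+1) - x (a.val+1))) * Z)
    = x 0 ^ L *
      ((∏ a ∈ (Finset.range (m + 3)).erase (p.val+1),
          (x (p.val+1) - t * x a) / (x (p.val+1) - x a)) *
       (∏ a ∈ ((Finset.range (m + 3)).erase 0).erase (p.val+1),
          (x 0 - t * x a) / (x 0 - x a)) *
       ((x 0 - t * x (p.val+1)) * x (p.val+1) ^ L / (x (p.val+1) - t * x 0)) * Z) := by
  have hmem1 : (p.val + 1) ∈ (Finset.range (m+3)).erase 0 := by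
    simp only [Finset.mem_erase, Finset.mem_range]; omega
  have hmem2 : (0 : ℕ) ∈ (Finset.range (m+3)).erase (p.val+1) := by
    simp only [Finset.mem_erase, Finset.mem_range]; omega
  rw [Icc_erase, ← Finset.mul_prod_erase _ _ hmem1, ← Finset.mul_prod_erase _ _ hmem2,
    C_prod_eq m p (fun a => (x (p.val+1) - t * x a) / (x (p.val+1) - x a)),
    Finset.erase_right_comm (a := 0) (b := p.val+1)]
  exact alg_helper (x 0) (x (p.val+1)) t _ _ Z L (x_sub_x_ne (by omega))
    (x_sub_x_ne (by omega)) (x_sub_tx_ne _ _)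

/-- **Equation (Weird2).** For a weakly decreasing `λ` of length `n > 2`:
`-x_1^{λ_2} ∏_{a=2}^n (x_1-t x_a)/(x_1-x_a) ζ(P_{λ'})
 = x_1^{λ_2} Σ_{i=2}^n ∏_{a≠i}(x_i-t x_a)/(x_i-x_a) ∏_{a≠1,i}(x_1-t x_a)/(x_1-x_a)
   ((x_1-t x_i) x_i^{λ_2}/(x_i-t x_1)) ζ_{1,i}(P_{λ''})`. -/
theorem weird2 (m : ℕ) (lam : Fin (m + 3) → ℕ)
    (hlam : ∀ i j : Fin (m + 3), i ≤ j → lam j ≤ lam i) :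
    -(x 0 ^ lam 1) * (∏ a ∈ Finset.Icc 1 (m + 2), (x 0 - t * x a) / (x 0 - x a)) *
        zeta 0 (HL (m + 2) (fun j => lam j.succ)) =
      x 0 ^ lam 1 *
        ∑ i ∈ Finset.Icc 1 (m + 2),
          (∏ a ∈ (Finset.range (m + 3)).erase i, (x i - t * x a) / (x i - x a)) *
          (∏ a ∈ ((Finset.range (m + 3)).erase 0).erase i, (x 0 - t * x a) / (x 0 - x a)) *
          ((x 0 - t * x i) * x i ^ lam 1 / (x i - t * x 0)) *
          zetaP 0 i (HL (m + 1) (fun l => lam l.succ.succ)) := by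
  have hkey : ∀ p : Fin (m+2),
      G (m+1) (fun j => ((Equiv.swap 0 p j.succ : Fin (m+2)).val + 1)) (fun l => lam l.succ.succ)
        = zetaP 0 (p.val + 1) (HL (m+1) (fun l => lam l.succ.succ)) := by
    intro p
    rw [zetaP0_HL p.val (m+1) (fun l => lam l.succ.succ)]
    rw [← G_perm (m+1) (fun j => shiftNat (p.val+1) (j.val+1)) (fun l => lam l.succ.succ)
      (Fin.cycleRange ⟨p.val - 1, by omega⟩)]
    exact congrArg (fun f => G (m+1) f (fun l => lam l.succ.succ))
      (funext fun j => (shift_swap_eq m p ⟨p.val - 1, by omega⟩ rfl j).symm)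
  have hB : G (m+2) (fun i => i.val+1) (fun j : Fin (m+2) => lam j.succ)
      = ∑ p : Fin (m+2), x (p.val+1) ^ lam (Fin.succ 0) *
        (∏ a ∈ Finset.univ.erase p,
          (x (p.val+1) - t * x (a.val+1)) / (x (p.val+1) - x (a.val+1))) *
        G (m+1) (fun j => ((Equiv.swap 0 p j.succ : Fin (m+2)).val + 1))
          (fun j => lam j.succ.succ) :=
    G_branch (m+1) _ _
  have hR : (∑ i ∈ Finset.Icc 1 (m + 2),
        (∏ a ∈ (Finset.range (m + 3)).erase i, (x i - t * x a) / (x i - x a)) *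
        (∏ a ∈ ((Finset.range (m + 3)).erase 0).erase i, (x 0 - t * x a) / (x 0 - x a)) *
        ((x 0 - t * x i) * x i ^ lam 1 / (x i - t * x 0)) *
        zetaP 0 i (HL (m + 1) (fun l => lam l.succ.succ)))
      = ∑ p : Fin (m+2),
        (∏ a ∈ (Finset.range (m + 3)).erase (p.val+1),
          (x (p.val+1) - t * x a) / (x (p.val+1) - x a)) *
        (∏ a ∈ ((Finset.range (m + 3)).erase 0).erase (p.val+1),
          (x 0 - t * x a) / (x 0 - x a)) *
        ((x 0 - t * x (p.val+1)) * x (p.val+1) ^ lam 1 / (x (p.val+1) - t * x 0)) *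
        zetaP 0 (p.val+1) (HL (m + 1) (fun l => lam l.succ.succ)) :=
    sum_Icc_one (m+1) _
  rw [zeta0_HL (m+2) (fun j => lam j.succ), hB, hR]
  simp only [hkey, Fin.succ_zero_eq_one]
  rw [Finset.mul_sum, Finset.mul_sum]
  refine Finset.sum_congr rfl fun p _ => ?_
  exact term_eq m (lam 1) p _

end
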